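/- In any implication semigroup (a semigroup S with a distinguished element ω satisfying xyz = zωxyzω² and ω³ = ω for all x,y,z ∈ S), the identity ω² = ω holds. -/
import Mathlib


theorem stmt_0 {S : Type*} [Semigroup S] (ω : S)
    (h1 : ∀ x y z : S, x * y * z = z * ω * x * y * z * ω * ω)
    (h2 : ω * ω * ω = ω) :
    ω * ω = ω := by
  have h := h1 ω ω (ω * ω)
  simp only [mul_assoc] at h h2 ⊢
  rw [h2, h2, h2, h2] at h
  exact h
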